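/- arXiv:2208.13531 — 3 statements merged into one kernel-verified Lean document; each statement's English description precedes it below -/
import Mathlib

section
/- Let n = p+q with p ≥ q ≥ 1, let X be an n×n Hermitian matrix with eigenvalues λ_1 ≥ ... ≥ λ_n, and let s_1 ≥ ... ≥ s_q ≥ 0 be the singular values of the upper-right p×q block π(X) of X. Then λ_1 − λ_n ≥ 2 s_1. -/
open Matrix
open scoped ComplexOrder

noncomputable section

/-- `lam` is the weakly decreasing list of eigenvalues of the Hermitian matrix `X`. -/
def IsEigList {n : ℕ} {X : Matrix (Fin n) (Fin n) ℂ} (hX : X.IsHermitian)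
    (lam : Fin n → ℝ) : Prop :=
  Antitone lam ∧ ∃ e : Fin n ≃ Fin n, ∀ i, lam i = hX.eigenvalues (e i)

/-- `s` is the weakly decreasing list of singular values of `Y`. -/
def IsSingList {p q : ℕ} (Y : Matrix (Fin p) (Fin q) ℂ) (s : Fin q → ℝ) : Prop :=
  Antitone s ∧ (∀ k, 0 ≤ s k) ∧
    ∃ e : Fin q ≃ Fin q, ∀ k,
      s k ^ 2 = (Matrix.posSemidef_conjTranspose_mul_self Y).1.eigenvalues (e k)

/-- The upper-right `p × q` block of an `(p+q) × (p+q)` matrix. -/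
def offBlock {p q : ℕ} (X : Matrix (Fin (p + q)) (Fin (p + q)) ℂ) :
    Matrix (Fin p) (Fin q) ℂ :=
  fun i j => X (Fin.castAdd q i) (Fin.natAdd p j)

/-- The matrix `[[0, Y],[Yᴴ, 0]]`. -/
def blockZ {p q : ℕ} (Y : Matrix (Fin p) (Fin q) ℂ) :
    Matrix (Fin (p + q)) (Fin (p + q)) ℂ :=
  Matrix.reindex finSumFinEquiv finSumFinEquiv (Matrix.fromBlocks 0 Y Yᴴ 0)

/-- `ν(s) = (s₁,…,s_q,0,…,0,−s_q,…,−s₁) ∈ ℝⁿ`, `n = p + q`. -/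
def nuList (p q : ℕ) (s : Fin q → ℝ) : Fin (p + q) → ℝ :=
  fun k =>
    if h : (k : ℕ) < q then s ⟨k, h⟩
    else if h' : p ≤ (k : ℕ) then
      -s ⟨p + q - 1 - (k : ℕ), by have := k.isLt; omega⟩
    else 0

/-- The matrix `I_{p,q} = Diag(I_p, −I_q)`. -/
def Ipq (p q : ℕ) : Matrix (Fin (p + q)) (Fin (p + q)) ℂ :=
  Matrix.diagonal fun k => if (k : ℕ) < p then 1 else -1

/-- The `U(n)`-conjugation orbit of a matrix. -/
def uOrbit {n : ℕ} (X : Matrix (Fin n) (Fin n) ℂ) : Set (Matrix (Fin n) (Fin n) ℂ) :=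
  { Y | ∃ g ∈ Matrix.unitaryGroup (Fin n) ℂ, Y = g * X * star g }

/-- Membership in the Horn cone `Horn(n)`. -/
def HornMem {n : ℕ} (x y z : Fin n → ℝ) : Prop :=
  ∃ (A B : Matrix (Fin n) (Fin n) ℂ) (hA : A.IsHermitian) (hB : B.IsHermitian)
    (hC : (A + B).IsHermitian), IsEigList hA x ∧ IsEigList hB y ∧ IsEigList hC z


section Helpers

lemma star_mul_self_eq_normSq' (z : ℂ) : star z * z = ((‖z‖ ^ 2 : ℝ) : ℂ) := by
  rw [show (star z : ℂ) = (starRingEnd ℂ) z from rfl, RCLike.conj_mul]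
  norm_cast

lemma quadform_eq' {n : Type*} [Fintype n] [DecidableEq n]
    {A : Matrix n n ℂ} (hA : A.IsHermitian) (x : n → ℂ) :
    ∃ y : n → ℂ,
      star x ⬝ᵥ A *ᵥ x = ∑ i, (hA.eigenvalues i : ℂ) * (‖y i‖ ^ 2 : ℝ) ∧
      star x ⬝ᵥ x = ∑ i, ((‖y i‖ ^ 2 : ℝ) : ℂ) := by
  set U : Matrix n n ℂ := (hA.eigenvectorUnitary : Matrix n n ℂ) with hU
  have hsy : star (star U *ᵥ x) = star x ᵥ* U := by
    rw [star_mulVec, Matrix.star_eq_conjTranspose, conjTranspose_conjTranspose]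
  refine ⟨star U *ᵥ x, ?_, ?_⟩
  · conv_lhs => rw [hA.spectral_theorem]
    rw [Unitary.conjStarAlgAut_apply, ← hU, ← mulVec_mulVec, ← mulVec_mulVec, dotProduct_mulVec (star x) U, ← hsy]
    set y := star U *ᵥ x
    unfold dotProduct
    refine Finset.sum_congr rfl fun i _ => ?_
    rw [mulVec_diagonal]
    show star (y i) * ((hA.eigenvalues i : ℂ) * y i) = _
    rw [show star (y i) * ((hA.eigenvalues i : ℂ) * y i)
        = (hA.eigenvalues i : ℂ) * (star (y i) * y i) by ring,
      star_mul_self_eq_normSq']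
  · have h2 : star x ᵥ* U ⬝ᵥ (star U *ᵥ x) = star x ⬝ᵥ x := by
      rw [← dotProduct_mulVec, mulVec_mulVec,
        Matrix.mem_unitaryGroup_iff.mp hA.eigenvectorUnitary.2]
      simp
    rw [← h2, ← hsy]
    set y := star U *ᵥ x
    unfold dotProduct
    exact Finset.sum_congr rfl fun i _ => star_mul_self_eq_normSq' (y i)

lemma rayleigh_bounds' {n : Type*} [Fintype n] [DecidableEq n]
    {A : Matrix n n ℂ} (hA : A.IsHermitian) (x : n → ℂ) {lo hi : ℝ}
    (hlo : ∀ i, lo ≤ hA.eigenvalues i) (hhi : ∀ i, hA.eigenvalues i ≤ hi) :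
    lo * (star x ⬝ᵥ x).re ≤ (star x ⬝ᵥ A *ᵥ x).re ∧
      (star x ⬝ᵥ A *ᵥ x).re ≤ hi * (star x ⬝ᵥ x).re := by
  obtain ⟨y, h1, h2⟩ := quadform_eq' hA x
  have hre1 : (star x ⬝ᵥ A *ᵥ x).re = ∑ i, hA.eigenvalues i * ‖y i‖ ^ 2 := by
    rw [h1, Complex.re_sum]; simp [← Complex.ofReal_pow, ← Complex.ofReal_mul]
  have hre2 : (star x ⬝ᵥ x).re = ∑ i, ‖y i‖ ^ 2 := by
    rw [h2, Complex.re_sum]; simp [← Complex.ofReal_pow]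
  rw [hre1, hre2, Finset.mul_sum, Finset.mul_sum]
  constructor
  · exact Finset.sum_le_sum fun i _ =>
      mul_le_mul_of_nonneg_right (hlo i) (by positivity)
  · exact Finset.sum_le_sum fun i _ =>
      mul_le_mul_of_nonneg_right (hhi i) (by positivity)

lemma dot_submatrix' {m n : Type*} [Fintype m] [Fintype n] (e : m ≃ n)
    (A : Matrix n n ℂ) (w : m → ℂ) :
    star (w ∘ e.symm) ⬝ᵥ A *ᵥ (w ∘ e.symm) = star w ⬝ᵥ (A.submatrix e e) *ᵥ w ∧
      star (w ∘ e.symm) ⬝ᵥ (w ∘ e.symm) = star w ⬝ᵥ w := by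
  constructor
  · simp only [dotProduct, mulVec, dotProduct, submatrix_apply, Pi.star_apply,
      Function.comp_apply]
    refine (Fintype.sum_equiv e (fun i => star (w i) * ∑ j, A (e i) (e j) * w j)
      (fun k => star (w (e.symm k)) * ∑ l, A k l * w (e.symm l)) fun i => ?_).symm
    simp only [Equiv.symm_apply_apply]
    congr 1
    refine (Fintype.sum_equiv e (fun j => A (e i) (e j) * w j)
      (fun l => A (e i) l * w (e.symm l)) fun j => ?_)
    simp only [Equiv.symm_apply_apply]
  · simp only [dotProduct, Pi.star_apply, Function.comp_apply]
    exact (Fintype.sum_equiv e (fun i => star (w i) * w i)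
      (fun k => star (w (e.symm k)) * w (e.symm k))
      fun i => by simp only [Equiv.symm_apply_apply]).symm

end Helpers

/-- `λ₁ − λ_n ≥ 2 s₁`. -/
theorem lambda_one_sub_lambda_n (p q : ℕ) (hq : 1 ≤ q) (hpq : q ≤ p)
    (X : Matrix (Fin (p + q)) (Fin (p + q)) ℂ) (hX : X.IsHermitian)
    (lam : Fin (p + q) → ℝ) (hlam : IsEigList hX lam)
    (s : Fin q → ℝ) (hs : IsSingList (offBlock X) s) :
    lam ⟨0, by omega⟩ - lam ⟨p + q - 1, by omega⟩ ≥ 2 * s ⟨0, by omega⟩ := by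
  obtain ⟨hlam_anti, e, hlam⟩ := hlam
  obtain ⟨-, hs_nonneg, eqv, hs_eig⟩ := hs
  have hq0 : 0 < q := hq
  have hn0 : 0 < p + q := by omega
  have hnN : p + q - 1 < p + q := by omega
  set i0 : Fin (p + q) := ⟨0, hn0⟩ with hi0
  set iN : Fin (p + q) := ⟨p + q - 1, hnN⟩ with hiN
  have hmax : ∀ i, hX.eigenvalues i ≤ lam i0 := fun i => by
    rw [show hX.eigenvalues i = lam (e.symm i) by rw [hlam]; simp]
    exact hlam_anti (Fin.mk_le_of_le_val (Nat.zero_le _))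
  have hmin : ∀ i, lam iN ≤ hX.eigenvalues i := fun i => by
    rw [show hX.eigenvalues i = lam (e.symm i) by rw [hlam]; simp]
    refine hlam_anti ?_
    have := (e.symm i).isLt
    exact Fin.le_def.mpr (by simp only [hiN]; omega)
  set k0 : Fin q := ⟨0, hq0⟩ with hk0
  set s0 : ℝ := s k0 with hs0
  rcases eq_or_lt_of_le (hs_nonneg k0) with h0 | h0
  · have h1 : lam iN ≤ lam i0 := hlam_anti (Fin.mk_le_of_le_val (Nat.zero_le _))
    have h2 : s0 = 0 := h0.symm
    show lam i0 - lam iN ≥ 2 * s0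
    rw [h2]
    simpa using h1
  -- main case : s0 > 0
  set Y : Matrix (Fin p) (Fin q) ℂ := offBlock X with hY
  have hB : (Yᴴ * Y).IsHermitian := (Matrix.posSemidef_conjTranspose_mul_self Y).1
  set v : Fin q → ℂ := ⇑(hB.eigenvectorBasis (eqv k0)) with hv
  have hBv : (Yᴴ * Y) *ᵥ v = (s0 ^ 2 : ℝ) • v := by
    rw [hv, hB.mulVec_eigenvectorBasis, ← hs_eig k0]
  have hv_norm : star v ⬝ᵥ v = 1 := by
    have h1 : (inner ℂ (hB.eigenvectorBasis (eqv k0)) (hB.eigenvectorBasis (eqv k0)) : ℂ) = 1 := by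
      rw [inner_self_eq_norm_sq_to_K, hB.eigenvectorBasis.orthonormal.1 (eqv k0)]
      norm_num
    have h2 := EuclideanSpace.inner_eq_star_dotProduct (𝕜 := ℂ)
      (hB.eigenvectorBasis (eqv k0)) (hB.eigenvectorBasis (eqv k0))
    rw [h1] at h2
    rw [dotProduct_comm]
    exact h2.symm
  have hvBv : star v ⬝ᵥ ((Yᴴ * Y) *ᵥ v) = ((s0 ^ 2 : ℝ) : ℂ) := by
    rw [hBv, dotProduct_smul, hv_norm]
    simp [Complex.real_smul]
  have hYvYv : star (Y *ᵥ v) ⬝ᵥ (Y *ᵥ v) = ((s0 ^ 2 : ℝ) : ℂ) := by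
    rw [star_mulVec, ← dotProduct_mulVec, mulVec_mulVec, hvBv]
  set c : ℂ := ((s0 : ℂ))⁻¹ with hc
  have hstarc : star c = c := by
    rw [hc, show (star ((s0:ℂ)⁻¹)) = (starRingEnd ℂ) ((s0:ℂ)⁻¹) from rfl, map_inv₀,
      Complex.conj_ofReal]
  have hs0ne : (s0 : ℂ) ≠ 0 := by
    exact_mod_cast Complex.ofReal_ne_zero.mpr (ne_of_gt h0)
  set u : Fin p → ℂ := c • (Y *ᵥ v) with hu
  have hu_norm : star u ⬝ᵥ u = 1 := by
    rw [hu, star_smul, smul_dotProduct, dotProduct_smul, hYvYv, hstarc, hc]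
    push_cast
    field_simp
    simp only [smul_eq_mul]
    field_simp
  have hquv : star u ⬝ᵥ (Y *ᵥ v) = (s0 : ℂ) := by
    rw [hu, star_smul, smul_dotProduct, hYvYv, hstarc, hc]
    push_cast
    field_simp
    simp only [smul_eq_mul]
    field_simp
  have hqvu : star v ⬝ᵥ (Yᴴ *ᵥ u) = (s0 : ℂ) := by
    rw [hu, mulVec_smul, mulVec_mulVec, dotProduct_smul, hvBv, hc]
    push_cast
    field_simp
    simp only [smul_eq_mul]
    field_simp
  clear_value c u v
  -- block matrix setup
  set X' : Matrix (Fin p ⊕ Fin q) (Fin p ⊕ Fin q) ℂ :=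
    X.submatrix finSumFinEquiv finSumFinEquiv with hX'
  have hY12 : X'.toBlocks₁₂ = Y := by
    ext i j
    simp [hX', toBlocks₁₂, hY, offBlock, finSumFinEquiv_apply_left, finSumFinEquiv_apply_right]
  have hY21 : X'.toBlocks₂₁ = Yᴴ := by
    ext j i
    simp only [hX', toBlocks₂₁, of_apply, submatrix_apply, conjTranspose_apply, hY, offBlock,
      finSumFinEquiv_apply_left, finSumFinEquiv_apply_right]
    exact (hX.apply _ _).symm
  have hstar_elim : ∀ (z : Fin q → ℂ), star (Sum.elim u z) = Sum.elim (star u) (star z) := by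
    intro z; funext k; cases k <;> rfl
  have hform : ∀ ε : ℂ,
      star (Sum.elim u (ε • v)) ⬝ᵥ X' *ᵥ (Sum.elim u (ε • v)) =
        star u ⬝ᵥ (X'.toBlocks₁₁ *ᵥ u) + ε * (s0 : ℂ) + star ε * (s0 : ℂ)
          + star ε * ε * (star v ⬝ᵥ (X'.toBlocks₂₂ *ᵥ v)) := by
    intro ε
    conv_lhs => rw [← fromBlocks_toBlocks X', fromBlocks_mulVec, hstar_elim,
      sumElim_dotProduct_sumElim]
    simp only [Sum.elim_comp_inl, Sum.elim_comp_inr]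
    rw [hY12, hY21]
    simp only [mulVec_smul, dotProduct_add, dotProduct_smul, star_smul, smul_dotProduct,
      hquv, hqvu, smul_eq_mul]
    ring
  have hnorm_elim : ∀ ε : ℂ, star ε * ε = 1 →
      star (Sum.elim u (ε • v)) ⬝ᵥ (Sum.elim u (ε • v)) = 2 := by
    intro ε hε
    rw [hstar_elim, sumElim_dotProduct_sumElim, hu_norm, star_smul, smul_dotProduct,
      dotProduct_smul, hv_norm]
    simp only [smul_eq_mul]
    rw [show star ε * (ε * 1) = star ε * ε by ring, hε]
    norm_num
  -- transfer to Fin (p+q)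
  have key : ∀ ε : ℂ, star ε * ε = 1 →
      (star ((Sum.elim u (ε • v)) ∘ finSumFinEquiv.symm) ⬝ᵥ
          X *ᵥ ((Sum.elim u (ε • v)) ∘ finSumFinEquiv.symm) =
        star u ⬝ᵥ (X'.toBlocks₁₁ *ᵥ u) + ε * (s0 : ℂ) + star ε * (s0 : ℂ)
          + star ε * ε * (star v ⬝ᵥ (X'.toBlocks₂₂ *ᵥ v))) ∧
      star ((Sum.elim u (ε • v)) ∘ finSumFinEquiv.symm) ⬝ᵥ
          ((Sum.elim u (ε • v)) ∘ finSumFinEquiv.symm) = 2 := by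
    intro ε hε
    obtain ⟨hd1, hd2⟩ := dot_submatrix' finSumFinEquiv X (Sum.elim u (ε • v))
    exact ⟨hd1.trans (hform ε), hd2.trans (hnorm_elim ε hε)⟩
  set a : ℂ := star u ⬝ᵥ (X'.toBlocks₁₁ *ᵥ u) with ha
  set d : ℂ := star v ⬝ᵥ (X'.toBlocks₂₂ *ᵥ v) with hd
  -- plus vector
  obtain ⟨hp1, hp2⟩ := key 1 (by norm_num)
  obtain ⟨hm1, hm2⟩ := key (-1) (by simp)
  set xp := (Sum.elim u ((1:ℂ) • v)) ∘ finSumFinEquiv.symm with hxp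
  set xm := (Sum.elim u ((-1:ℂ) • v)) ∘ finSumFinEquiv.symm with hxm
  have hrp := rayleigh_bounds' hX xp (lo := lam iN) (hi := lam i0) hmin hmax
  have hrm := rayleigh_bounds' hX xm (lo := lam iN) (hi := lam i0) hmin hmax
  rw [hp1, hp2] at hrp
  rw [hm1, hm2] at hrm
  have hrep : (a + 1 * (s0:ℂ) + star (1:ℂ) * (s0:ℂ) + star (1:ℂ) * 1 * d).re
      = a.re + 2 * s0 + d.re := by
    simp [Complex.add_re]
    ring
  have hrem : (a + (-1) * (s0:ℂ) + star (-1:ℂ) * (s0:ℂ) + star (-1:ℂ) * (-1) * d).re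
      = a.re - 2 * s0 + d.re := by
    simp [Complex.add_re]
    ring
  rw [hrep] at hrp
  rw [hrem] at hrm
  norm_num at hrp hrm
  have goal1 : lam i0 - lam iN ≥ 2 * s0 := by linarith [hrp.2, hrm.1]
  exact goal1
end
end

section
/- Let X be a 6×6 Hermitian matrix with eigenvalues λ_1 ≥ ... ≥ λ_6, and let s_1 ≥ s_2 ≥ s_3 ≥ 0 be the singular values of the upper-right 3×3 block of X. Then λ_1 + λ_2 + λ_3 − λ_4 − λ_5 − λ_6 ≥ 2(s_1 + s_2 + s_3). -/
open Matrix
open scoped ComplexOrder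

noncomputable section

lemma gram_dot {n m : ℕ} (M N : Matrix (Fin n) (Fin m) ℂ) (x y : Fin m → ℂ) :
    star (M *ᵥ x) ⬝ᵥ (N *ᵥ y) = star x ⬝ᵥ ((Mᴴ * N) *ᵥ y) := by
  rw [star_mulVec, dotProduct_mulVec, vecMul_vecMul, ← dotProduct_mulVec]

lemma quad_eig {n : ℕ} {X : Matrix (Fin n) (Fin n) ℂ} (hX : X.IsHermitian) (w : Fin n → ℂ) :
    star w ⬝ᵥ (X *ᵥ w) =
      ∑ j, ((hX.eigenvalues j : ℂ) *
        ((‖(star (hX.eigenvectorUnitary : Matrix (Fin n) (Fin n) ℂ) *ᵥ w) j‖ ^ 2 : ℝ) : ℂ)) := by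
  set U : Matrix (Fin n) (Fin n) ℂ := (hX.eigenvectorUnitary : Matrix (Fin n) (Fin n) ℂ) with hU
  set z := star U *ᵥ w with hz
  have hRC : (RCLike.ofReal : ℝ → ℂ) = Complex.ofReal := rfl
  have h1 : star z ⬝ᵥ (diagonal (Complex.ofReal ∘ hX.eigenvalues) *ᵥ z) = star w ⬝ᵥ (X *ᵥ w) := by
    rw [hz, mulVec_mulVec, gram_dot]
    congr 2
    have hsp := hX.spectral_theorem
    rw [hRC] at hsp
    rw [star_eq_conjTranspose U, conjTranspose_conjTranspose, ← mul_assoc, ← star_eq_conjTranspose U]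
    exact hsp.symm
  rw [← h1]
  simp only [dotProduct, mulVec_diagonal, Pi.star_apply, Function.comp]
  refine Finset.sum_congr rfl fun j _ => ?_
  have h2 : (starRingEnd ℂ) (z j) * z j = (‖z j‖ : ℂ) ^ 2 := RCLike.conj_mul (z j)
  push_cast
  simp only [Complex.star_def]
  linear_combination (hX.eigenvalues j : ℂ) * h2

lemma sum_normsq {n : ℕ} (z : Fin n → ℂ) (h : star z ⬝ᵥ z = 1) : ∑ j, ‖z j‖ ^ 2 = 1 := by
  have h2 : ((∑ j, ‖z j‖ ^ 2 : ℝ) : ℂ) = 1 := by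
    push_cast
    rw [← h]
    simp only [dotProduct, Pi.star_apply, Complex.star_def]
    refine Finset.sum_congr rfl fun j _ => ?_
    rw [RCLike.conj_mul (z j)]
    norm_cast

  exact_mod_cast h2

lemma bessel_dot {n : ℕ} {ι : Type*} [Fintype ι] [DecidableEq ι] (z : ι → Fin n → ℂ)
    (horth : ∀ i j, star (z i) ⬝ᵥ z j = if i = j then 1 else 0) (j : Fin n) :
    ∑ k, ‖z k j‖ ^ 2 ≤ 1 := by
  have hON : Orthonormal ℂ (fun k => (WithLp.equiv 2 (Fin n → ℂ)).symm (z k)) := by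
    rw [orthonormal_iff_ite]
    intro i k
    exact (EuclideanSpace.inner_toLp_toLp _ _).trans ((dotProduct_comm _ _).trans (horth i k))
  have hb := hON.sum_inner_products_le (s := Finset.univ) (EuclideanSpace.single j 1)
  rw [EuclideanSpace.norm_single] at hb
  simp only [EuclideanSpace.inner_single_right, norm_mul, norm_one, one_mul,
    RCLike.norm_conj] at hb
  calc ∑ k, ‖z k j‖ ^ 2 = ∑ k, ‖((WithLp.equiv 2 (Fin n → ℂ)).symm (z k)) j‖ ^ 2 := rfl
    _ ≤ 1 := by simpa using hb

lemma dot_append {p q : ℕ} (a a' : Fin p → ℂ) (b b' : Fin q → ℂ) :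
    star (Fin.append a b) ⬝ᵥ Fin.append a' b' = star a ⬝ᵥ a' + star b ⬝ᵥ b' := by
  simp [dotProduct, Fin.sum_univ_add]

lemma dot_mulVec_append {p q : ℕ} (X : Matrix (Fin (p+q)) (Fin (p+q)) ℂ)
    (a a' : Fin p → ℂ) (b b' : Fin q → ℂ) :
    star (Fin.append a b) ⬝ᵥ (X *ᵥ Fin.append a' b') =
      (∑ i, ∑ j, star (a i) * X (Fin.castAdd q i) (Fin.castAdd q j) * a' j)
    + (∑ i, ∑ j, star (a i) * X (Fin.castAdd q i) (Fin.natAdd p j) * b' j)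
    + (∑ i, ∑ j, star (b i) * X (Fin.natAdd p i) (Fin.castAdd q j) * a' j)
    + (∑ i, ∑ j, star (b i) * X (Fin.natAdd p i) (Fin.natAdd p j) * b' j) := by
  simp only [dotProduct, mulVec, Fin.sum_univ_add, Fin.append_left, Fin.append_right,
    Pi.star_apply, Finset.mul_sum, mul_add, Finset.sum_add_distrib, mul_assoc]
  ring

set_option maxHeartbeats 1000000 in
lemma comb (lam A B : Fin 6 → ℝ) (hl : Antitone lam)
    (hA0 : ∀ i, 0 ≤ A i) (hA1 : ∀ i, A i ≤ 1)
    (hB0 : ∀ i, 0 ≤ B i) (hB1 : ∀ i, B i ≤ 1)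
    (m : ℕ) (hm : m ≤ 3)
    (hsA : ∑ i, A i = m) (hsB : ∑ i, B i = m) :
    ∑ i, lam i * (A i - B i) ≤ lam 0 + lam 1 + lam 2 - lam 3 - lam 4 - lam 5 := by
  have hle : ∀ i j : Fin 6, i ≤ j → lam j ≤ lam i := fun i j h => hl h
  rw [Fin.sum_univ_six] at hsA hsB ⊢
  interval_cases m
  · have eA : lam 0 * (A 0 + A 1 + A 2 + A 3 + A 4 + A 5 - 0) = 0 := by
      linear_combination lam 0 * hsA
    have eB : lam 5 * (B 0 + B 1 + B 2 + B 3 + B 4 + B 5 - 0) = 0 := by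
      linear_combination lam 5 * hsB
    nlinarith [eA, eB, hle 0 3 (by decide), hle 1 4 (by decide), hle 2 5 (by decide),
      mul_nonneg (sub_nonneg.2 (hle 0 1 (by decide))) (hA0 1),
      mul_nonneg (sub_nonneg.2 (hle 0 2 (by decide))) (hA0 2),
      mul_nonneg (sub_nonneg.2 (hle 0 3 (by decide))) (hA0 3),
      mul_nonneg (sub_nonneg.2 (hle 0 4 (by decide))) (hA0 4),
      mul_nonneg (sub_nonneg.2 (hle 0 5 (by decide))) (hA0 5),
      mul_nonneg (sub_nonneg.2 (hle 0 5 (by decide))) (hB0 0),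
      mul_nonneg (sub_nonneg.2 (hle 1 5 (by decide))) (hB0 1),
      mul_nonneg (sub_nonneg.2 (hle 2 5 (by decide))) (hB0 2),
      mul_nonneg (sub_nonneg.2 (hle 3 5 (by decide))) (hB0 3),
      mul_nonneg (sub_nonneg.2 (hle 4 5 (by decide))) (hB0 4)]
  · have eA : lam 1 * (A 0 + A 1 + A 2 + A 3 + A 4 + A 5 - 1) = 0 := by
      linear_combination lam 1 * hsA
    have eB : lam 4 * (B 0 + B 1 + B 2 + B 3 + B 4 + B 5 - 1) = 0 := by
      linear_combination lam 4 * hsB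
    nlinarith [eA, eB, hle 1 4 (by decide), hle 2 3 (by decide),
      mul_nonneg (sub_nonneg.2 (hle 0 1 (by decide))) (sub_nonneg.2 (hA1 0)),
      mul_nonneg (sub_nonneg.2 (hle 1 2 (by decide))) (hA0 2),
      mul_nonneg (sub_nonneg.2 (hle 1 3 (by decide))) (hA0 3),
      mul_nonneg (sub_nonneg.2 (hle 1 4 (by decide))) (hA0 4),
      mul_nonneg (sub_nonneg.2 (hle 1 5 (by decide))) (hA0 5),
      mul_nonneg (sub_nonneg.2 (hle 0 4 (by decide))) (hB0 0),
      mul_nonneg (sub_nonneg.2 (hle 1 4 (by decide))) (hB0 1),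
      mul_nonneg (sub_nonneg.2 (hle 2 4 (by decide))) (hB0 2),
      mul_nonneg (sub_nonneg.2 (hle 3 4 (by decide))) (hB0 3),
      mul_nonneg (sub_nonneg.2 (hle 4 5 (by decide))) (sub_nonneg.2 (hB1 5))]
  · have eA : lam 2 * (A 0 + A 1 + A 2 + A 3 + A 4 + A 5 - 2) = 0 := by
      linear_combination lam 2 * hsA
    have eB : lam 3 * (B 0 + B 1 + B 2 + B 3 + B 4 + B 5 - 2) = 0 := by
      linear_combination lam 3 * hsB
    nlinarith [eA, eB, hle 2 3 (by decide),
      mul_nonneg (sub_nonneg.2 (hle 0 2 (by decide))) (sub_nonneg.2 (hA1 0)),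
      mul_nonneg (sub_nonneg.2 (hle 1 2 (by decide))) (sub_nonneg.2 (hA1 1)),
      mul_nonneg (sub_nonneg.2 (hle 2 3 (by decide))) (hA0 3),
      mul_nonneg (sub_nonneg.2 (hle 2 4 (by decide))) (hA0 4),
      mul_nonneg (sub_nonneg.2 (hle 2 5 (by decide))) (hA0 5),
      mul_nonneg (sub_nonneg.2 (hle 0 3 (by decide))) (hB0 0),
      mul_nonneg (sub_nonneg.2 (hle 1 3 (by decide))) (hB0 1),
      mul_nonneg (sub_nonneg.2 (hle 2 3 (by decide))) (hB0 2),
      mul_nonneg (sub_nonneg.2 (hle 3 4 (by decide))) (sub_nonneg.2 (hB1 4)),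
      mul_nonneg (sub_nonneg.2 (hle 3 5 (by decide))) (sub_nonneg.2 (hB1 5))]
  · have eA : lam 3 * (A 0 + A 1 + A 2 + A 3 + A 4 + A 5 - 3) = 0 := by
      linear_combination lam 3 * hsA
    have eB : lam 2 * (B 0 + B 1 + B 2 + B 3 + B 4 + B 5 - 3) = 0 := by
      linear_combination lam 2 * hsB
    nlinarith [eA, eB,
      mul_nonneg (sub_nonneg.2 (hle 0 3 (by decide))) (sub_nonneg.2 (hA1 0)),
      mul_nonneg (sub_nonneg.2 (hle 1 3 (by decide))) (sub_nonneg.2 (hA1 1)),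
      mul_nonneg (sub_nonneg.2 (hle 2 3 (by decide))) (sub_nonneg.2 (hA1 2)),
      mul_nonneg (sub_nonneg.2 (hle 3 4 (by decide))) (hA0 4),
      mul_nonneg (sub_nonneg.2 (hle 3 5 (by decide))) (hA0 5),
      mul_nonneg (sub_nonneg.2 (hle 0 2 (by decide))) (hB0 0),
      mul_nonneg (sub_nonneg.2 (hle 1 2 (by decide))) (hB0 1),
      mul_nonneg (sub_nonneg.2 (hle 2 3 (by decide))) (sub_nonneg.2 (hB1 3)),
      mul_nonneg (sub_nonneg.2 (hle 2 4 (by decide))) (sub_nonneg.2 (hB1 4)),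
      mul_nonneg (sub_nonneg.2 (hle 2 5 (by decide))) (sub_nonneg.2 (hB1 5))]

/-- for a `6×6` Hermitian matrix,
`λ₁ + λ₂ + λ₃ − λ₄ − λ₅ − λ₆ ≥ 2(s₁ + s₂ + s₃)`. -/
theorem six_by_six_inequality (X : Matrix (Fin (3 + 3)) (Fin (3 + 3)) ℂ)
    (hX : X.IsHermitian)
    (lam : Fin (3 + 3) → ℝ) (hlam : IsEigList hX lam)
    (s : Fin 3 → ℝ) (hs : IsSingList (offBlock X) s) :
    lam 0 + lam 1 + lam 2 - lam 3 - lam 4 - lam 5 ≥ 2 * (s 0 + s 1 + s 2) := by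
  classical
  obtain ⟨hlanti, e6, hlam6⟩ := hlam
  obtain ⟨-, hs0, e3, hs3⟩ := hs
  set Y : Matrix (Fin 3) (Fin 3) ℂ := offBlock X with hYdef
  set hYh := (Matrix.posSemidef_conjTranspose_mul_self Y).1 with hYhdef
  set vv : Fin 3 → (Fin 3 → ℂ) := fun k => ⇑(hYh.eigenvectorBasis (e3 k)) with hvv
  have heig : ∀ k, (Yᴴ * Y) *ᵥ vv k = ((s k ^ 2 : ℝ) : ℂ) • vv k := by
    intro k
    have h1 := hYh.mulVec_eigenvectorBasis (e3 k)
    rw [← hs3 k] at h1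
    rw [hvv]
    rw [h1]
    funext i
    simp [Complex.real_smul]
  have hvvorth : ∀ j k, star (vv j) ⬝ᵥ vv k = if j = k then 1 else 0 := by
    intro j k
    have h0 := hYh.eigenvectorBasis.orthonormal
    rw [orthonormal_iff_ite] at h0
    have h2 := h0 (e3 j) (e3 k)
    rw [EuclideanSpace.inner_eq_star_dotProduct] at h2
    rw [dotProduct_comm]
    simpa using h2
  have hYvgram : ∀ j k, star (Y *ᵥ vv j) ⬝ᵥ (Y *ᵥ vv k)
      = ((s k ^ 2 : ℝ) : ℂ) * (if j = k then 1 else 0) := by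
    intro j k
    rw [gram_dot, heig k, dotProduct_smul, smul_eq_mul, hvvorth j k]
  set T : Finset (Fin 3) := Finset.univ.filter (fun k => s k ≠ 0) with hTdef
  have hmemT : ∀ k, k ∈ T ↔ s k ≠ 0 := by
    intro k; simp [hTdef]
  set u : Fin 3 → (Fin 3 → ℂ) := fun k => ((s k : ℂ))⁻¹ • (Y *ᵥ vv k) with hu
  have hugram : ∀ j ∈ T, ∀ k ∈ T, star (u j) ⬝ᵥ u k = if j = k then 1 else 0 := by
    intro j hj k hk
    rw [hu]
    simp only [star_smul, smul_dotProduct, dotProduct_smul, star_inv₀, Complex.star_def,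
      Complex.conj_ofReal, smul_eq_mul]
    rw [hYvgram j k]
    by_cases h : j = k
    · subst h
      rw [if_pos rfl]
      have hsne : (s j : ℂ) ≠ 0 := by
        exact_mod_cast Complex.ofReal_ne_zero.2 ((hmemT j).1 hj)
      push_cast
      field_simp
    · simp [h]
  have hcross : ∀ k ∈ T, star (u k) ⬝ᵥ (Y *ᵥ vv k) = (s k : ℂ) := by
    intro k hk
    rw [hu]
    simp only [star_smul, smul_dotProduct, star_inv₀, Complex.star_def,
      Complex.conj_ofReal, smul_eq_mul]
    rw [hYvgram k k, if_pos rfl]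
    have hsne : (s k : ℂ) ≠ 0 := Complex.ofReal_ne_zero.2 ((hmemT k).1 hk)
    push_cast
    field_simp
  have hconj : ∀ a b : Fin 3 → ℂ,
      (∑ i, ∑ j, star (b i) * X (Fin.natAdd 3 i) (Fin.castAdd 3 j) * a j)
        = (starRingEnd ℂ) (∑ i, ∑ j, star (a i) * X (Fin.castAdd 3 i) (Fin.natAdd 3 j) * b j) := by
    intro a b
    simp only [map_sum]
    rw [Finset.sum_comm]
    refine Finset.sum_congr rfl fun i _ => Finset.sum_congr rfl fun j _ => ?_
    have hx : X (Fin.natAdd 3 j) (Fin.castAdd 3 i) = (starRingEnd ℂ) (X (Fin.castAdd 3 i) (Fin.natAdd 3 j)) := by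
      conv_lhs => rw [← hX]
      rw [conjTranspose_apply, Complex.star_def]
    rw [hx]
    simp only [Complex.star_def, _root_.map_mul, Complex.conj_conj]
    ring
  set c : ℝ := (Real.sqrt 2)⁻¹ with hcdef
  have hc2 : (c : ℂ) * (c : ℂ) = 1 / 2 := by
    have hcc : c * c = 1 / 2 := by
      rw [hcdef, ← mul_inv, Real.mul_self_sqrt (by norm_num : (0:ℝ) ≤ 2)]
      norm_num
    rw [← Complex.ofReal_mul, hcc]
    norm_num
  set wp : Fin 3 → (Fin (3+3) → ℂ) := fun k => (c : ℂ) • Fin.append (u k) (vv k) with hwp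
  set wm : Fin 3 → (Fin (3+3) → ℂ) := fun k => (c : ℂ) • Fin.append (u k) (-(vv k)) with hwm
  have hsmuldot : ∀ (x y : Fin (3+3) → ℂ), star ((c:ℂ) • x) ⬝ᵥ ((c:ℂ) • y) = (1/2) * (star x ⬝ᵥ y) := by
    intro x y
    simp only [star_smul, smul_dotProduct, dotProduct_smul, Complex.star_def,
      Complex.conj_ofReal, smul_eq_mul]
    rw [← mul_assoc, hc2]
  have hwporth : ∀ j ∈ T, ∀ k ∈ T, star (wp j) ⬝ᵥ wp k = if j = k then 1 else 0 := by
    intro j hj k hk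
    rw [hwp]
    simp only
    rw [hsmuldot, dot_append, hugram j hj k hk, hvvorth j k]
    by_cases h : j = k <;> simp [h] <;> norm_num
  have hwmorth : ∀ j ∈ T, ∀ k ∈ T, star (wm j) ⬝ᵥ wm k = if j = k then 1 else 0 := by
    intro j hj k hk
    rw [hwm]
    simp only
    rw [hsmuldot, dot_append]
    have : star (-(vv j)) ⬝ᵥ (-(vv k)) = star (vv j) ⬝ᵥ vv k := by
      rw [star_neg, neg_dotProduct, dotProduct_neg, neg_neg]
    rw [this, hugram j hj k hk, hvvorth j k]
    by_cases h : j = k <;> simp [h] <;> norm_num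
  have hS12 : ∀ a b : Fin 3 → ℂ,
      (∑ i, ∑ j, star (a i) * X (Fin.castAdd 3 i) (Fin.natAdd 3 j) * b j) = star a ⬝ᵥ (Y *ᵥ b) := by
    intro a b
    simp only [dotProduct, mulVec, Pi.star_apply, Finset.mul_sum, hYdef, offBlock, mul_assoc]
  have hq : ∀ k, ∀ b : Fin 3 → ℂ,
      star ((c:ℂ) • Fin.append (u k) b) ⬝ᵥ (X *ᵥ ((c:ℂ) • Fin.append (u k) b))
      = 1/2 * ((∑ i, ∑ j, star (u k i) * X (Fin.castAdd 3 i) (Fin.castAdd 3 j) * u k j)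
        + (∑ i, ∑ j, star (u k i) * X (Fin.castAdd 3 i) (Fin.natAdd 3 j) * b j)
        + (∑ i, ∑ j, star (b i) * X (Fin.natAdd 3 i) (Fin.castAdd 3 j) * u k j)
        + (∑ i, ∑ j, star (b i) * X (Fin.natAdd 3 i) (Fin.natAdd 3 j) * b j)) := by
    intro k b
    rw [mulVec_smul, hsmuldot, dot_mulVec_append]
  have hdiff : ∀ k ∈ T,
      star (wp k) ⬝ᵥ (X *ᵥ wp k) - star (wm k) ⬝ᵥ (X *ᵥ wm k) = 2 * (s k : ℂ) := by
    intro k hk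
    rw [hwp, hwm]
    simp only
    rw [hq k (vv k), hq k (-(vv k))]
    simp only [Pi.neg_apply, mul_neg, neg_mul, neg_neg, star_neg, Finset.sum_neg_distrib]
    rw [hconj (u k) (vv k), hS12 (u k) (vv k), hcross k hk, Complex.conj_ofReal]
    ring
  set U : Matrix (Fin (3+3)) (Fin (3+3)) ℂ := (hX.eigenvectorUnitary : Matrix (Fin (3+3)) (Fin (3+3)) ℂ) with hUdef
  have hUU : (star U)ᴴ * star U = 1 := by
    rw [star_eq_conjTranspose, conjTranspose_conjTranspose]
    exact mem_unitaryGroup_iff.mp hX.eigenvectorUnitary.2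
  have hgramz : ∀ x y : Fin (3+3) → ℂ,
      star (star U *ᵥ x) ⬝ᵥ (star U *ᵥ y) = star x ⬝ᵥ y := by
    intro x y
    rw [gram_dot, hUU, one_mulVec]
  set zp : Fin 3 → (Fin (3+3) → ℂ) := fun k => star U *ᵥ wp k with hzp
  set zm : Fin 3 → (Fin (3+3) → ℂ) := fun k => star U *ᵥ wm k with hzm
  set a : Fin (3+3) → ℝ := fun j => ∑ k ∈ T, ‖zp k j‖ ^ 2 with ha
  set b : Fin (3+3) → ℝ := fun j => ∑ k ∈ T, ‖zm k j‖ ^ 2 with hb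
  -- key identity
  have hkey : ∑ j, hX.eigenvalues j * (a j - b j) = 2 * ∑ k ∈ T, s k := by
    have hC : ((∑ j, hX.eigenvalues j * (a j - b j) : ℝ) : ℂ)
        = ((2 * ∑ k ∈ T, s k : ℝ) : ℂ) := by
      push_cast
      have hL : ∀ k ∈ T, star (wp k) ⬝ᵥ (X *ᵥ wp k) - star (wm k) ⬝ᵥ (X *ᵥ wm k)
          = ∑ j, ((hX.eigenvalues j : ℂ) * (((‖zp k j‖^2 : ℝ) : ℂ) - ((‖zm k j‖^2 : ℝ) : ℂ))) := by
        intro k hk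
        rw [quad_eig hX (wp k), quad_eig hX (wm k), ← Finset.sum_sub_distrib]
        refine Finset.sum_congr rfl fun j _ => ?_
        rw [hzp, hzm, hUdef]
        ring
      calc (∑ j, (hX.eigenvalues j : ℂ) * ((a j : ℂ) - (b j : ℂ)))
          = ∑ j, ∑ k ∈ T, ((hX.eigenvalues j : ℂ) * (((‖zp k j‖^2 : ℝ) : ℂ) - ((‖zm k j‖^2 : ℝ) : ℂ))) := by
            refine Finset.sum_congr rfl fun j _ => ?_
            rw [ha, hb]
            push_cast
            rw [← Finset.sum_sub_distrib, Finset.mul_sum]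
        _ = ∑ k ∈ T, ∑ j, ((hX.eigenvalues j : ℂ) * (((‖zp k j‖^2 : ℝ) : ℂ) - ((‖zm k j‖^2 : ℝ) : ℂ))) :=
            Finset.sum_comm
        _ = ∑ k ∈ T, (star (wp k) ⬝ᵥ (X *ᵥ wp k) - star (wm k) ⬝ᵥ (X *ᵥ wm k)) :=
            (Finset.sum_congr rfl fun k hk => (hL k hk).symm)
        _ = ∑ k ∈ T, 2 * (s k : ℂ) := Finset.sum_congr rfl fun k hk => hdiff k hk
        _ = 2 * ∑ k ∈ T, (s k : ℂ) := by rw [Finset.mul_sum]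
    exact_mod_cast hC
  have hTcard : T.card ≤ 3 := by
    calc T.card ≤ (Finset.univ : Finset (Fin 3)).card := Finset.card_filter_le _ _
      _ = 3 := by simp
  have hzporth : ∀ j ∈ T, ∀ k ∈ T, star (zp j) ⬝ᵥ zp k = if j = k then 1 else 0 := by
    intro j hj k hk
    rw [hzp]
    simp only
    rw [hgramz]
    exact hwporth j hj k hk
  have hzmorth : ∀ j ∈ T, ∀ k ∈ T, star (zm j) ⬝ᵥ zm k = if j = k then 1 else 0 := by
    intro j hj k hk
    rw [hzm]
    simp only
    rw [hgramz]
    exact hwmorth j hj k hk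
  have ha0 : ∀ j, 0 ≤ a j := fun j => Finset.sum_nonneg fun k _ => by positivity
  have hb0 : ∀ j, 0 ≤ b j := fun j => Finset.sum_nonneg fun k _ => by positivity
  have hsubT : ∀ (f : Fin 3 → ℝ), ∑ k ∈ T, f k = ∑ k : {k : Fin 3 // s k ≠ 0}, f k.1 := by
    intro f
    exact Finset.sum_subtype T (fun k => hmemT k) f
  have ha1 : ∀ j, a j ≤ 1 := by
    intro j
    rw [ha]
    simp only
    rw [hsubT]
    refine bessel_dot (fun k : {k : Fin 3 // s k ≠ 0} => zp k.1) ?_ j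
    intro i k
    rw [hzporth i.1 ((hmemT i.1).2 i.2) k.1 ((hmemT k.1).2 k.2)]
    by_cases h : i = k
    · simp [h]
    · rw [if_neg h, if_neg (fun hh => h (Subtype.ext hh))]
  have hb1 : ∀ j, b j ≤ 1 := by
    intro j
    rw [hb]
    simp only
    rw [hsubT]
    refine bessel_dot (fun k : {k : Fin 3 // s k ≠ 0} => zm k.1) ?_ j
    intro i k
    rw [hzmorth i.1 ((hmemT i.1).2 i.2) k.1 ((hmemT k.1).2 k.2)]
    by_cases h : i = k
    · simp [h]
    · rw [if_neg h, if_neg (fun hh => h (Subtype.ext hh))]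
  have hsa : ∑ j, a j = T.card := by
    rw [ha]
    simp only
    rw [Finset.sum_comm]
    rw [Finset.sum_congr rfl (fun k hk => sum_normsq (zp k) (by rw [hzporth k hk k hk, if_pos rfl]))]
    simp
  have hsb : ∑ j, b j = T.card := by
    rw [hb]
    simp only
    rw [Finset.sum_comm]
    rw [Finset.sum_congr rfl (fun k hk => sum_normsq (zm k) (by rw [hzmorth k hk k hk, if_pos rfl]))]
    simp
  have hcomb := comb lam (fun i => a (e6 i)) (fun i => b (e6 i)) hlanti
    (fun i => ha0 (e6 i)) (fun i => ha1 (e6 i)) (fun i => hb0 (e6 i)) (fun i => hb1 (e6 i))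
    T.card hTcard (by rw [Equiv.sum_comp e6 a]; exact hsa) (by rw [Equiv.sum_comp e6 b]; exact hsb)
  have hre : ∑ i, lam i * (a (e6 i) - b (e6 i)) = ∑ j, hX.eigenvalues j * (a j - b j) := by
    rw [← Equiv.sum_comp e6 (fun j => hX.eigenvalues j * (a j - b j))]
    exact Finset.sum_congr rfl fun i _ => by rw [hlam6 i]
  have hsT : ∑ k ∈ T, s k = s 0 + s 1 + s 2 := by
    rw [hTdef, Finset.sum_filter_ne_zero, Fin.sum_univ_three]
  rw [ge_iff_le, ← hsT, ← hkey, ← hre]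
  exact hcomb
end
end

section
/- For a 4×4 Hermitian matrix X with eigenvalues λ_1 ≥ λ_2 ≥ λ_3 ≥ λ_4 and singular values s_1 ≥ s_2 ≥ 0 of its upper-right 2×2 block, the following inequalities all hold: λ_1 − λ_4 ≥ 2s_1, λ_2 − λ_4 ≥ 2s_2, λ_1 − λ_3 ≥ 2s_2, and λ_1 + λ_2 − λ_3 − λ_4 ≥ 2(s_1 + s_2). -/
open Matrix
open scoped ComplexOrder

noncomputable section

/-! ### Auxiliary machinery -/

open scoped InnerProductSpace

section Aux

/-- Coercion of a plain function into `EuclideanSpace`. -/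
def toE {m : ℕ} (x : Fin m → ℂ) : EuclideanSpace ℂ (Fin m) := WithLp.toLp 2 x

/-- The standard Hermitian pairing on `Fin m → ℂ`. -/
def ip {m : ℕ} (x y : Fin m → ℂ) : ℂ := dotProduct (star x) y

lemma inner_toE {m : ℕ} (x y : Fin m → ℂ) : ⟪toE x, toE y⟫_ℂ = ip x y := by
  simp [toE, ip, dotProduct, PiLp.inner_apply, mul_comm]

lemma ip_add_right {m : ℕ} (x y z : Fin m → ℂ) : ip x (y + z) = ip x y + ip x z := by
  simp [ip, dotProduct_add]

lemma ip_smul_right {m : ℕ} (c : ℂ) (x y : Fin m → ℂ) : ip x (c • y) = c * ip x y := by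
  simp [ip]

lemma ip_smul_left {m : ℕ} (c : ℂ) (x y : Fin m → ℂ) :
    ip (c • x) y = (starRingEnd ℂ) c * ip x y := by
  simp [ip, star_smul, smul_dotProduct]

lemma ip_add_left {m : ℕ} (x y z : Fin m → ℂ) : ip (x + y) z = ip x z + ip y z := by
  simp [ip, star_add, add_dotProduct]

@[simp] lemma ip_neg_neg {m : ℕ} (x y : Fin m → ℂ) : ip (-x) (-y) = ip x y := by
  simp [ip]

lemma ip_mulVec_left {m m' : ℕ} (A : Matrix (Fin m) (Fin m') ℂ)
    (x : Fin m' → ℂ) (y : Fin m → ℂ) :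
    ip (A *ᵥ x) y = ip x (Aᴴ *ᵥ y) := by
  unfold ip
  rw [star_mulVec, ← Matrix.dotProduct_mulVec]

lemma ip_conj_sub {m : ℕ} (U X : Matrix (Fin m) (Fin m) ℂ) (hU : Uᴴ = U) (x : Fin m → ℂ) :
    ip x ((X - U * X * U) *ᵥ x) = ip x (X *ᵥ x) - ip (U *ᵥ x) (X *ᵥ (U *ᵥ x)) := by
  have h1 : ip (U *ᵥ x) (X *ᵥ (U *ᵥ x)) = ip x ((U * X * U) *ᵥ x) := by
    rw [ip_mulVec_left U x, hU, Matrix.mulVec_mulVec, Matrix.mulVec_mulVec, Matrix.mul_assoc]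
  rw [h1]
  unfold ip
  rw [Matrix.sub_mulVec, dotProduct_sub]

lemma ip_combo {m : ℕ} {g1 g2 : Fin m → ℂ} (h11 : ip g1 g1 = 1) (h22 : ip g2 g2 = 1)
    (h12 : ip g1 g2 = 0) (h21 : ip g2 g1 = 0) (a b a' b' : ℂ) :
    ip (a • g1 + b • g2) (a' • g1 + b' • g2)
      = (starRingEnd ℂ) a * a' + (starRingEnd ℂ) b * b' := by
  simp only [ip_add_left, ip_add_right, ip_smul_left, ip_smul_right, h11, h22, h12, h21]
  ring

lemma build_u {m p : ℕ} (Y : Matrix (Fin m) (Fin p) ℂ) (sv : ℝ) (hsv : sv ≠ 0)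
    (vk : Fin p → ℂ) (heig : (Yᴴ * Y) *ᵥ vk = ((sv ^ 2 : ℝ) : ℂ) • vk) :
    ∃ uk : Fin m → ℂ, Y *ᵥ vk = (sv : ℂ) • uk ∧ Yᴴ *ᵥ uk = (sv : ℂ) • vk := by
  have hsv' : (sv : ℂ) ≠ 0 := by exact_mod_cast hsv
  refine ⟨(sv : ℂ)⁻¹ • (Y *ᵥ vk), ?_, ?_⟩
  · rw [smul_smul, mul_inv_cancel₀ hsv', one_smul]
  · rw [Matrix.mulVec_smul, Matrix.mulVec_mulVec, heig, smul_smul]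
    congr 1
    push_cast
    field_simp

lemma ip_u {m p : ℕ} (Y : Matrix (Fin m) (Fin p) ℂ) (sj sk : ℝ) (hk : sk ≠ 0)
    (vj vk : Fin p → ℂ) (uj uk : Fin m → ℂ)
    (hYvj : Y *ᵥ vj = (sj : ℂ) • uj) (hYvk : Y *ᵥ vk = (sk : ℂ) • uk)
    (hYTuk : Yᴴ *ᵥ uk = (sk : ℂ) • vk) :
    (sj : ℂ) * ip uj uk = (sk : ℂ) * ip vj vk := by
  have hk' : (sk : ℂ) ≠ 0 := by exact_mod_cast hk
  have h1 : ip (Y *ᵥ vj) (Y *ᵥ vk) = (sk : ℂ) * ((sj : ℂ) * ip uj uk) := by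
    rw [hYvj, hYvk, ip_smul_right, ip_smul_left, Complex.conj_ofReal]
  have h2 : ip (Y *ᵥ vj) (Y *ᵥ vk) = (sk : ℂ) * ((sk : ℂ) * ip vj vk) := by
    rw [ip_mulVec_left, hYvk, Matrix.mulVec_smul, hYTuk, ip_smul_right, ip_smul_right]
  exact mul_left_cancel₀ hk' (h1.symm.trans h2)

lemma exists_ab (c1 c2 : ℂ) : ∃ a b : ℂ, a * c1 + b * c2 = 0 ∧ 0 < ‖a‖ ^ 2 + ‖b‖ ^ 2 := by
  by_cases h : c2 = 0
  · exact ⟨0, 1, by simp [h], by norm_num⟩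
  · refine ⟨c2, -c1, by ring, ?_⟩
    have : 0 < ‖c2‖ := by simpa using h
    positivity

/-! ### Spectral expansion lemmas -/

lemma parseval {n : ℕ} (b : OrthonormalBasis (Fin n) ℂ (EuclideanSpace ℂ (Fin n)))
    (x : EuclideanSpace ℂ (Fin n)) :
    ∑ i, ‖⟪b i, x⟫_ℂ‖ ^ 2 = ‖x‖ ^ 2 := by
  have h := b.sum_inner_mul_inner x x
  have h2 : ∀ i, ⟪x, b i⟫_ℂ * ⟪b i, x⟫_ℂ = (‖⟪b i, x⟫_ℂ‖ ^ 2 : ℝ) := by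
    intro i
    rw [← inner_conj_symm (b i) x, RCLike.mul_conj, RCLike.norm_conj]
    norm_cast
  simp only [h2] at h
  rw [inner_self_eq_norm_sq_to_K] at h
  exact_mod_cast congrArg Complex.re h

lemma rayleigh_expand {n : ℕ} (X : Matrix (Fin n) (Fin n) ℂ)
    (b : OrthonormalBasis (Fin n) ℂ (EuclideanSpace ℂ (Fin n)))
    (lam : Fin n → ℝ) (hb : ∀ i, X *ᵥ (b i) = lam i • (b i : EuclideanSpace ℂ (Fin n)))
    (x : EuclideanSpace ℂ (Fin n)) :
    ⟪x, (WithLp.toLp 2 (X *ᵥ x) : EuclideanSpace ℂ (Fin n))⟫_ℂ = ∑ i, ((lam i * ‖⟪b i, x⟫_ℂ‖ ^ 2 : ℝ) : ℂ) := by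
  have key : (WithLp.toLp 2 (X *ᵥ x) : EuclideanSpace ℂ (Fin n))
      = ∑ i, (⟪b i, x⟫_ℂ * (lam i : ℂ)) • b i := by
    show Matrix.toEuclideanLin X x = _
    conv_lhs => rw [← b.sum_repr' x]
    rw [map_sum]
    congr 1; funext i
    rw [_root_.map_smul]
    show ⟪b i, x⟫_ℂ • (WithLp.toLp 2 (X *ᵥ (b i)) : EuclideanSpace ℂ (Fin n)) = _
    rw [hb i, RCLike.real_smul_eq_coe_smul (K := ℂ), WithLp.toLp_smul, WithLp.toLp_ofLp,
      smul_smul]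
    rfl
  rw [key, inner_sum]
  congr 1; funext i
  rw [inner_smul_right]
  have h3 : ⟪x, b i⟫_ℂ = (starRingEnd ℂ) ⟪b i, x⟫_ℂ := (inner_conj_symm x (b i)).symm
  rw [h3]
  calc ⟪b i, x⟫_ℂ * (lam i : ℂ) * (starRingEnd ℂ) ⟪b i, x⟫_ℂ
      = (lam i : ℂ) * (⟪b i, x⟫_ℂ * (starRingEnd ℂ) ⟪b i, x⟫_ℂ) := by ring
    _ = _ := by rw [RCLike.mul_conj]; rw [Complex.ofReal_mul]; norm_num

lemma rayleigh_re {n : ℕ} (X : Matrix (Fin n) (Fin n) ℂ)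
    (b : OrthonormalBasis (Fin n) ℂ (EuclideanSpace ℂ (Fin n)))
    (lam : Fin n → ℝ) (hb : ∀ i, X *ᵥ (b i) = lam i • (b i : EuclideanSpace ℂ (Fin n)))
    (x : Fin n → ℂ) :
    (ip x (X *ᵥ x)).re = ∑ i, lam i * ‖⟪b i, toE x⟫_ℂ‖ ^ 2 := by
  have h := rayleigh_expand X b lam hb (toE x)
  have h2 : ⟪toE x, (WithLp.toLp 2 (X *ᵥ (toE x)) : EuclideanSpace ℂ (Fin n))⟫_ℂ = ip x (X *ᵥ x) :=
    inner_toE _ _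
  rw [h2, ← Complex.ofReal_sum] at h
  rw [h, Complex.ofReal_re]

lemma parseval_ip {n : ℕ} (b : OrthonormalBasis (Fin n) ℂ (EuclideanSpace ℂ (Fin n)))
    (x : Fin n → ℂ) :
    ∑ i, ‖⟪b i, toE x⟫_ℂ‖ ^ 2 = (ip x x).re :=
  calc ∑ i, ‖⟪b i, toE x⟫_ℂ‖ ^ 2 = ‖toE x‖ ^ 2 := parseval b (toE x)
    _ = RCLike.re ⟪toE x, toE x⟫_ℂ := InnerProductSpace.norm_sq_eq_re_inner (𝕜 := ℂ) (toE x)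
    _ = (ip x x).re := by rw [inner_toE]; rfl

lemma sum_univ_four' {M : Type*} [AddCommMonoid M] (f : Fin (2 + 2) → M) :
    ∑ i, f i = f 0 + f 1 + f 2 + f 3 := Fin.sum_univ_four f

/-! ### Glueing vectors in `ℂ²` to vectors in `ℂ⁴` -/

def glueV (u v : Fin 2 → ℂ) : Fin (2 + 2) → ℂ :=
  fun i => if h : (i : ℕ) < 2 then u ⟨i, h⟩ else v ⟨(i : ℕ) - 2, by have := i.isLt; omega⟩

@[simp] lemma glueV_0 (u v : Fin 2 → ℂ) : glueV u v 0 = u 0 := rfl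
@[simp] lemma glueV_1 (u v : Fin 2 → ℂ) : glueV u v 1 = u 1 := rfl
@[simp] lemma glueV_2 (u v : Fin 2 → ℂ) : glueV u v 2 = v 0 := rfl
@[simp] lemma glueV_3 (u v : Fin 2 → ℂ) : glueV u v 3 = v 1 := rfl

@[simp] lemma val_0 : ((0 : Fin (2+2)) : ℕ) = 0 := rfl
@[simp] lemma val_1 : ((1 : Fin (2+2)) : ℕ) = 1 := rfl
@[simp] lemma val_2 : ((2 : Fin (2+2)) : ℕ) = 2 := rfl
@[simp] lemma val_3 : ((3 : Fin (2+2)) : ℕ) = 3 := rfl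

@[simp] lemma castAdd_0 : (Fin.castAdd 2 (0 : Fin 2)) = (0 : Fin (2+2)) := rfl
@[simp] lemma castAdd_1 : (Fin.castAdd 2 (1 : Fin 2)) = (1 : Fin (2+2)) := rfl
@[simp] lemma natAdd_0 : (Fin.natAdd 2 (0 : Fin 2)) = (2 : Fin (2+2)) := rfl
@[simp] lemma natAdd_1 : (Fin.natAdd 2 (1 : Fin 2)) = (3 : Fin (2+2)) := rfl
@[simp] lemma addNat_0 : (Fin.addNat (0 : Fin 2) 2) = (2 : Fin (2+2)) := rfl
@[simp] lemma addNat_1 : (Fin.addNat (1 : Fin 2) 2) = (3 : Fin (2+2)) := rfl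

lemma ip_glueV (u v u' v' : Fin 2 → ℂ) :
    ip (glueV u v) (glueV u' v') = ip u u' + ip v v' := by
  simp [ip, dotProduct, Fin.sum_univ_four, Fin.sum_univ_two]
  ring

lemma Ipq_mulVec_glueV (u v : Fin 2 → ℂ) :
    Ipq 2 2 *ᵥ glueV u v = glueV u (-v) := by
  funext i
  fin_cases i <;>
    simp [Ipq, Matrix.mulVec, dotProduct, Fin.sum_univ_four, Matrix.diagonal]

lemma IpqH : (Ipq 2 2)ᴴ = Ipq 2 2 := by
  unfold Ipq
  have h : (star fun k : Fin (2+2) => if (k : ℕ) < 2 then (1 : ℂ) else -1)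
      = fun k : Fin (2+2) => if (k : ℕ) < 2 then (1 : ℂ) else -1 := by
    funext k
    by_cases h : (k : ℕ) < 2 <;> simp [h] <;> split_ifs <;> simp <;> omega
  rw [Matrix.diagonal_conjTranspose, h]

lemma M_mulVec (X : Matrix (Fin (2+2)) (Fin (2+2)) ℂ) (hX : X.IsHermitian)
    (u v : Fin 2 → ℂ) (s : ℝ)
    (h1 : offBlock X *ᵥ v = (s : ℂ) • u) (h2 : (offBlock X)ᴴ *ᵥ u = (s : ℂ) • v) :
    (X - Ipq 2 2 * X * Ipq 2 2) *ᵥ glueV u v = ((2 * s : ℝ) : ℂ) • glueV u v := by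
  have e0 := congrFun h1 0
  have e1 := congrFun h1 1
  have f0 := congrFun h2 0
  have f1 := congrFun h2 1
  simp [Matrix.mulVec, dotProduct, Fin.sum_univ_two, offBlock,
    Matrix.conjTranspose_apply] at e0 e1 f0 f1
  have g20 : (starRingEnd ℂ) (X 0 2) = X 2 0 := hX.apply 2 0
  have g21 : (starRingEnd ℂ) (X 1 2) = X 2 1 := hX.apply 2 1
  have g30 : (starRingEnd ℂ) (X 0 3) = X 3 0 := hX.apply 3 0
  have g31 : (starRingEnd ℂ) (X 1 3) = X 3 1 := hX.apply 3 1
  rw [g20, g21] at f0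
  rw [g30, g31] at f1
  funext i
  fin_cases i <;>
    simp [Matrix.mulVec, dotProduct, Fin.sum_univ_four, Matrix.sub_apply,
      Matrix.mul_diagonal, Matrix.diagonal_mul, Ipq]
  · linear_combination 2 * e0
  · linear_combination 2 * e1
  · linear_combination 2 * f0
  · linear_combination 2 * f1

end Aux

lemma orthonormal_pair {m : ℕ} (x y : Fin m → ℂ) (hxx : ip x x = 1) (hyy : ip y y = 1)
    (hxy : ip x y = 0) : Orthonormal ℂ ![toE x, toE y] := by
  have hyx : ip y x = 0 := by
    rw [← inner_toE, ← inner_conj_symm, inner_toE, hxy, map_zero]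
  have hnx : ‖toE x‖ = 1 := by
    have h2 : ‖toE x‖ ^ 2 = 1 := by
      rw [InnerProductSpace.norm_sq_eq_re_inner (𝕜 := ℂ)]
      have : ⟪toE x, toE x⟫_ℂ = 1 := by rw [inner_toE, hxx]
      rw [this]
      simp
    nlinarith [norm_nonneg (toE x)]
  have hny : ‖toE y‖ = 1 := by
    have h2 : ‖toE y‖ ^ 2 = 1 := by
      rw [InnerProductSpace.norm_sq_eq_re_inner (𝕜 := ℂ)]
      have : ⟪toE y, toE y⟫_ℂ = 1 := by rw [inner_toE, hyy]
      rw [this]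
      simp
    nlinarith [norm_nonneg (toE y)]
  constructor
  · intro i
    fin_cases i
    · exact hnx
    · exact hny
  · intro i j hij
    fin_cases i <;> fin_cases j
    · exact absurd rfl hij
    · show ⟪toE x, toE y⟫_ℂ = 0
      rw [inner_toE]; exact hxy
    · show ⟪toE y, toE x⟫_ℂ = 0
      rw [inner_toE]; exact hyx
    · exact absurd rfl hij

section Aux2

lemma g_facts (X : Matrix (Fin (2+2)) (Fin (2+2)) ℂ) (hX : X.IsHermitian)
    (sv : ℝ) (u v : Fin 2 → ℂ) (cc : ℂ) (hcc : (starRingEnd ℂ) cc * cc = 2⁻¹)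
    (huu : ip u u = 1) (hvv : ip v v = 1)
    (hYv : offBlock X *ᵥ v = (sv : ℂ) • u) (hYTu : (offBlock X)ᴴ *ᵥ u = (sv : ℂ) • v) :
    ∃ g h : Fin (2+2) → ℂ, g = cc • glueV u v ∧ h = cc • glueV u (-v) ∧
      ip g g = 1 ∧ ip h h = 1 ∧ Ipq 2 2 *ᵥ g = h ∧
      (X - Ipq 2 2 * X * Ipq 2 2) *ᵥ g = ((2 * sv : ℝ) : ℂ) • g := by
  refine ⟨cc • glueV u v, cc • glueV u (-v), rfl, rfl, ?_, ?_, ?_, ?_⟩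
  · rw [ip_smul_left, ip_smul_right, ip_glueV, huu, hvv]
    linear_combination 2 * hcc
  · rw [ip_smul_left, ip_smul_right, ip_glueV, huu, ip_neg_neg, hvv]
    linear_combination 2 * hcc
  · rw [Matrix.mulVec_smul, Ipq_mulVec_glueV]
  · rw [Matrix.mulVec_smul, M_mulVec X hX u v sv hYv hYTu, smul_comm]

end Aux2

set_option maxHeartbeats 1000000 in
/-- the inequalities describing `𝒜(2,2)`. -/
theorem A22_inequalities (X : Matrix (Fin (2 + 2)) (Fin (2 + 2)) ℂ)
    (hX : X.IsHermitian)
    (lam : Fin (2 + 2) → ℝ) (hlam : IsEigList hX lam)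
    (s : Fin 2 → ℝ) (hs : IsSingList (offBlock X) s) :
    lam 0 - lam 3 ≥ 2 * s 0 ∧ lam 1 - lam 3 ≥ 2 * s 1 ∧
      lam 0 - lam 2 ≥ 2 * s 1 ∧
      lam 0 + lam 1 - lam 2 - lam 3 ≥ 2 * (s 0 + s 1) := by
  obtain ⟨hanti, e, he⟩ := hlam
  obtain ⟨hsanti, hspos, e2, he2⟩ := hs
  have l01 : lam 1 ≤ lam 0 := hanti (by decide)
  have l12 : lam 2 ≤ lam 1 := hanti (by decide)
  have l23 : lam 3 ≤ lam 2 := hanti (by decide)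
  have hs10 : s 1 ≤ s 0 := hsanti (by decide)
  -- the eigenbasis of X ordered according to lam
  set b : OrthonormalBasis (Fin (2+2)) ℂ (EuclideanSpace ℂ (Fin (2+2))) :=
    hX.eigenvectorBasis.reindex e.symm with hbdef
  have hb : ∀ i, X *ᵥ (b i) = lam i • (b i : EuclideanSpace ℂ (Fin (2+2))) := by
    intro i
    have h := hX.mulVec_eigenvectorBasis (e i)
    rw [← he i] at h
    simpa [hbdef, OrthonormalBasis.reindex_apply] using h
  have hkey : ∀ x : Fin (2+2) → ℂ, (ip x (X *ᵥ x)).re =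
      lam 0 * ‖⟪b 0, toE x⟫_ℂ‖^2 + lam 1 * ‖⟪b 1, toE x⟫_ℂ‖^2
      + lam 2 * ‖⟪b 2, toE x⟫_ℂ‖^2 + lam 3 * ‖⟪b 3, toE x⟫_ℂ‖^2 := by
    intro x
    rw [rayleigh_re X b lam hb x]
    exact sum_univ_four' _
  have hpar : ∀ x : Fin (2+2) → ℂ, ‖⟪b 0, toE x⟫_ℂ‖^2 + ‖⟪b 1, toE x⟫_ℂ‖^2
      + ‖⟪b 2, toE x⟫_ℂ‖^2 + ‖⟪b 3, toE x⟫_ℂ‖^2 = (ip x x).re := by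
    intro x
    rw [← parseval_ip b x]
    exact (sum_univ_four' (fun i => ‖⟪b i, toE x⟫_ℂ‖^2)).symm
  have hup : ∀ x : Fin (2+2) → ℂ, (ip x (X *ᵥ x)).re ≤ lam 0 * (ip x x).re := by
    intro x
    have h1 := hkey x
    rw [← hpar x]
    nlinarith [mul_nonneg (by linarith : (0:ℝ) ≤ lam 0 - lam 1) (sq_nonneg ‖⟪b 1, toE x⟫_ℂ‖),
      mul_nonneg (by linarith : (0:ℝ) ≤ lam 0 - lam 2) (sq_nonneg ‖⟪b 2, toE x⟫_ℂ‖),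
      mul_nonneg (by linarith : (0:ℝ) ≤ lam 0 - lam 3) (sq_nonneg ‖⟪b 3, toE x⟫_ℂ‖)]
  have hlow : ∀ x : Fin (2+2) → ℂ, lam 3 * (ip x x).re ≤ (ip x (X *ᵥ x)).re := by
    intro x
    have h1 := hkey x
    rw [← hpar x]
    nlinarith [mul_nonneg (by linarith : (0:ℝ) ≤ lam 0 - lam 3) (sq_nonneg ‖⟪b 0, toE x⟫_ℂ‖),
      mul_nonneg (by linarith : (0:ℝ) ≤ lam 1 - lam 3) (sq_nonneg ‖⟪b 1, toE x⟫_ℂ‖),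
      mul_nonneg (by linarith : (0:ℝ) ≤ lam 2 - lam 3) (sq_nonneg ‖⟪b 2, toE x⟫_ℂ‖)]
  have hup1 : ∀ x : Fin (2+2) → ℂ, ⟪b 0, toE x⟫_ℂ = 0 →
      (ip x (X *ᵥ x)).re ≤ lam 1 * (ip x x).re := by
    intro x hx
    have h1 := hkey x
    rw [hx] at h1
    simp only [norm_zero] at h1
    rw [← hpar x, hx]
    simp only [norm_zero]
    nlinarith [mul_nonneg (by linarith : (0:ℝ) ≤ lam 1 - lam 2) (sq_nonneg ‖⟪b 2, toE x⟫_ℂ‖),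
      mul_nonneg (by linarith : (0:ℝ) ≤ lam 1 - lam 3) (sq_nonneg ‖⟪b 3, toE x⟫_ℂ‖)]
  have hlow2 : ∀ x : Fin (2+2) → ℂ, ⟪b 3, toE x⟫_ℂ = 0 →
      lam 2 * (ip x x).re ≤ (ip x (X *ᵥ x)).re := by
    intro x hx
    have h1 := hkey x
    rw [hx] at h1
    simp only [norm_zero] at h1
    rw [← hpar x, hx]
    simp only [norm_zero]
    nlinarith [mul_nonneg (by linarith : (0:ℝ) ≤ lam 0 - lam 2) (sq_nonneg ‖⟪b 0, toE x⟫_ℂ‖),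
      mul_nonneg (by linarith : (0:ℝ) ≤ lam 1 - lam 2) (sq_nonneg ‖⟪b 1, toE x⟫_ℂ‖)]
  -- Bessel inequality for an orthonormal pair
  have hbey : ∀ (x y : Fin (2+2) → ℂ), ip x x = 1 → ip y y = 1 → ip x y = 0 →
      ∀ i, ‖⟪b i, toE x⟫_ℂ‖^2 + ‖⟪b i, toE y⟫_ℂ‖^2 ≤ 1 := by
    intro x y hxx hyy hxy i
    have horth : Orthonormal ℂ ![toE x, toE y] := orthonormal_pair x y hxx hyy hxy
    have h := horth.sum_inner_products_le (s := Finset.univ) (b i)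
    rw [Fin.sum_univ_two] at h
    simp only [Matrix.cons_val_zero, Matrix.cons_val_one, Matrix.head_cons] at h
    have hbn : ‖(b i : EuclideanSpace ℂ (Fin (2+2)))‖ = 1 := b.orthonormal.1 i
    rw [hbn] at h
    norm_num at h
    calc ‖⟪b i, toE x⟫_ℂ‖^2 + ‖⟪b i, toE y⟫_ℂ‖^2
        = ‖⟪toE x, b i⟫_ℂ‖^2 + ‖⟪toE y, b i⟫_ℂ‖^2 := by
          rw [norm_inner_symm (toE x), norm_inner_symm (toE y)]
      _ ≤ 1 := h
  have hkfup : ∀ (x y : Fin (2+2) → ℂ), ip x x = 1 → ip y y = 1 → ip x y = 0 →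
      (ip x (X *ᵥ x)).re + (ip y (X *ᵥ y)).re ≤ lam 0 + lam 1 := by
    intro x y hxx hyy hxy
    have hbe0 := hbey x y hxx hyy hxy 0
    have h1 := hkey x; have h2 := hpar x; rw [hxx] at h2
    have h3 := hkey y; have h4 := hpar y; rw [hyy] at h4
    rw [Complex.one_re] at h2 h4
    have m2 : lam 1 * (‖⟪b 0, toE x⟫_ℂ‖^2 + ‖⟪b 1, toE x⟫_ℂ‖^2 + ‖⟪b 2, toE x⟫_ℂ‖^2
        + ‖⟪b 3, toE x⟫_ℂ‖^2) = lam 1 := by rw [h2]; ring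
    have m4 : lam 1 * (‖⟪b 0, toE y⟫_ℂ‖^2 + ‖⟪b 1, toE y⟫_ℂ‖^2 + ‖⟪b 2, toE y⟫_ℂ‖^2
        + ‖⟪b 3, toE y⟫_ℂ‖^2) = lam 1 := by rw [h4]; ring
    linarith [m2, m4, mul_nonneg (by linarith : (0:ℝ) ≤ lam 0 - lam 1)
        (by linarith : (0:ℝ) ≤ 1 - (‖⟪b 0, toE x⟫_ℂ‖^2 + ‖⟪b 0, toE y⟫_ℂ‖^2)),
      mul_nonneg (by linarith : (0:ℝ) ≤ lam 1 - lam 2)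
        (by positivity : (0:ℝ) ≤ ‖⟪b 2, toE x⟫_ℂ‖^2 + ‖⟪b 2, toE y⟫_ℂ‖^2),
      mul_nonneg (by linarith : (0:ℝ) ≤ lam 1 - lam 3)
        (by positivity : (0:ℝ) ≤ ‖⟪b 3, toE x⟫_ℂ‖^2 + ‖⟪b 3, toE y⟫_ℂ‖^2)]
  have hkflow : ∀ (x y : Fin (2+2) → ℂ), ip x x = 1 → ip y y = 1 → ip x y = 0 →
      lam 2 + lam 3 ≤ (ip x (X *ᵥ x)).re + (ip y (X *ᵥ y)).re := by
    intro x y hxx hyy hxy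
    have hbe3 := hbey x y hxx hyy hxy 3
    have h1 := hkey x; have h2 := hpar x; rw [hxx] at h2
    have h3 := hkey y; have h4 := hpar y; rw [hyy] at h4
    rw [Complex.one_re] at h2 h4
    have m2 : lam 2 * (‖⟪b 0, toE x⟫_ℂ‖^2 + ‖⟪b 1, toE x⟫_ℂ‖^2 + ‖⟪b 2, toE x⟫_ℂ‖^2
        + ‖⟪b 3, toE x⟫_ℂ‖^2) = lam 2 := by rw [h2]; ring
    have m4 : lam 2 * (‖⟪b 0, toE y⟫_ℂ‖^2 + ‖⟪b 1, toE y⟫_ℂ‖^2 + ‖⟪b 2, toE y⟫_ℂ‖^2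
        + ‖⟪b 3, toE y⟫_ℂ‖^2) = lam 2 := by rw [h4]; ring
    linarith [m2, m4, mul_nonneg (by linarith : (0:ℝ) ≤ lam 0 - lam 2)
        (by positivity : (0:ℝ) ≤ ‖⟪b 0, toE x⟫_ℂ‖^2 + ‖⟪b 0, toE y⟫_ℂ‖^2),
      mul_nonneg (by linarith : (0:ℝ) ≤ lam 1 - lam 2)
        (by positivity : (0:ℝ) ≤ ‖⟪b 1, toE x⟫_ℂ‖^2 + ‖⟪b 1, toE y⟫_ℂ‖^2),
      mul_nonneg (by linarith : (0:ℝ) ≤ lam 2 - lam 3)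
        (by linarith : (0:ℝ) ≤ 1 - (‖⟪b 3, toE x⟫_ℂ‖^2 + ‖⟪b 3, toE y⟫_ℂ‖^2))]
    -- #### singular value data
  have hveq : ∀ j k : Fin 2, ip ((Matrix.posSemidef_conjTranspose_mul_self (offBlock X)).1.eigenvectorBasis (e2 j)) ((Matrix.posSemidef_conjTranspose_mul_self (offBlock X)).1.eigenvectorBasis (e2 k))
      = if j = k then (1:ℂ) else 0 := by
    intro j k
    have h := orthonormal_iff_ite.mp
      ((Matrix.posSemidef_conjTranspose_mul_self (offBlock X)).1.eigenvectorBasis.orthonormal) (e2 j) (e2 k)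
    rw [show (⟪(Matrix.posSemidef_conjTranspose_mul_self (offBlock X)).1.eigenvectorBasis (e2 j), (Matrix.posSemidef_conjTranspose_mul_self (offBlock X)).1.eigenvectorBasis (e2 k)⟫_ℂ)
      = ip ((Matrix.posSemidef_conjTranspose_mul_self (offBlock X)).1.eigenvectorBasis (e2 j)) ((Matrix.posSemidef_conjTranspose_mul_self (offBlock X)).1.eigenvectorBasis (e2 k)) from inner_toE _ _] at h
    rw [h]
    simp [EmbeddingLike.apply_eq_iff_eq]
  have heig : ∀ k, ((offBlock X)ᴴ * offBlock X) *ᵥ ((Matrix.posSemidef_conjTranspose_mul_self (offBlock X)).1.eigenvectorBasis (e2 k))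
      = ((s k ^ 2 : ℝ) : ℂ) • ((Matrix.posSemidef_conjTranspose_mul_self (offBlock X)).1.eigenvectorBasis (e2 k) : Fin 2 → ℂ) := by
    intro k
    have h := (Matrix.posSemidef_conjTranspose_mul_self (offBlock X)).1.mulVec_eigenvectorBasis (e2 k)
    rw [← he2 k] at h
    funext i
    have h3 := congrFun h i
    simpa [PiLp.smul_apply, Pi.smul_apply, Complex.real_smul, smul_eq_mul] using h3
  have hv00 : ip ((Matrix.posSemidef_conjTranspose_mul_self (offBlock X)).1.eigenvectorBasis (e2 0)) ((Matrix.posSemidef_conjTranspose_mul_self (offBlock X)).1.eigenvectorBasis (e2 0)) = 1 := by simpa using hveq 0 0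
  have hv11 : ip ((Matrix.posSemidef_conjTranspose_mul_self (offBlock X)).1.eigenvectorBasis (e2 1)) ((Matrix.posSemidef_conjTranspose_mul_self (offBlock X)).1.eigenvectorBasis (e2 1)) = 1 := by simpa using hveq 1 1
  have hv01 : ip ((Matrix.posSemidef_conjTranspose_mul_self (offBlock X)).1.eigenvectorBasis (e2 0)) ((Matrix.posSemidef_conjTranspose_mul_self (offBlock X)).1.eigenvectorBasis (e2 1)) = 0 := by simpa using hveq 0 1
  have hv10 : ip ((Matrix.posSemidef_conjTranspose_mul_self (offBlock X)).1.eigenvectorBasis (e2 1)) ((Matrix.posSemidef_conjTranspose_mul_self (offBlock X)).1.eigenvectorBasis (e2 0)) = 0 := by simpa using hveq 1 0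
  obtain ⟨cc, hcc⟩ : ∃ cc : ℂ, (starRingEnd ℂ) cc * cc = 2⁻¹ := by
    refine ⟨(Real.sqrt 2 : ℂ)⁻¹, ?_⟩
    have h2 : (Real.sqrt 2 : ℂ) * (Real.sqrt 2 : ℂ) = 2 := by
      norm_cast
      exact Real.mul_self_sqrt (by norm_num)
    rw [map_inv₀, Complex.conj_ofReal, ← mul_inv, h2]
  by_cases hs0 : s 0 = 0
  · have hs1 : s 1 = 0 := le_antisymm (by rw [← hs0]; exact hs10) (hspos 1)
    refine ⟨?_, ?_, ?_, ?_⟩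
    · rw [hs0]; linarith
    · rw [hs1]; linarith
    · rw [hs1]; linarith
    · rw [hs0, hs1]; linarith
  · -- construct the k = 0 singular pair
    have hs0c : ((s 0 : ℝ) : ℂ) ≠ 0 := by exact_mod_cast hs0
    obtain ⟨u0, hYv0, hYTu0⟩ := build_u (offBlock X) (s 0) hs0 ((Matrix.posSemidef_conjTranspose_mul_self (offBlock X)).1.eigenvectorBasis (e2 0)) (heig 0)
    have huu0 : ip u0 u0 = 1 := by
      have h := ip_u (offBlock X) (s 0) (s 0) hs0 ((Matrix.posSemidef_conjTranspose_mul_self (offBlock X)).1.eigenvectorBasis (e2 0)) ((Matrix.posSemidef_conjTranspose_mul_self (offBlock X)).1.eigenvectorBasis (e2 0)) u0 u0 hYv0 hYv0 hYTu0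
      rw [hv00, mul_one] at h
      exact mul_left_cancel₀ hs0c (h.trans (mul_one _).symm)
    obtain ⟨g0, h0, hg0def, hh0def, hgg0, hhh0, hUg0, hMg0⟩ :=
      g_facts X hX (s 0) u0 ((Matrix.posSemidef_conjTranspose_mul_self (offBlock X)).1.eigenvectorBasis (e2 0)) cc hcc huu0 hv00 hYv0 hYTu0
    have hd0 := ip_conj_sub (Ipq 2 2) X IpqH g0
    rw [hMg0, hUg0, ip_smul_right, hgg0, mul_one] at hd0
    have hd0re : 2 * s 0 = (ip g0 (X *ᵥ g0)).re - (ip h0 (X *ᵥ h0)).re := by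
      simpa [Complex.sub_re] using congrArg Complex.re hd0
    have hA0 := hup g0; rw [hgg0, Complex.one_re, mul_one] at hA0
    have hB0 := hlow h0; rw [hhh0, Complex.one_re, mul_one] at hB0
    have ineq1 : lam 0 - lam 3 ≥ 2 * s 0 := by linarith
    by_cases hs1 : s 1 = 0
    · refine ⟨ineq1, ?_, ?_, ?_⟩
      · rw [hs1]; linarith
      · rw [hs1]; linarith
      · rw [hs1]; linarith [ineq1]
    · -- construct the k = 1 singular pair
      have hs1c : ((s 1 : ℝ) : ℂ) ≠ 0 := by exact_mod_cast hs1
      obtain ⟨u1, hYv1, hYTu1⟩ := build_u (offBlock X) (s 1) hs1 ((Matrix.posSemidef_conjTranspose_mul_self (offBlock X)).1.eigenvectorBasis (e2 1)) (heig 1)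
      have huu1 : ip u1 u1 = 1 := by
        have h := ip_u (offBlock X) (s 1) (s 1) hs1 ((Matrix.posSemidef_conjTranspose_mul_self (offBlock X)).1.eigenvectorBasis (e2 1)) ((Matrix.posSemidef_conjTranspose_mul_self (offBlock X)).1.eigenvectorBasis (e2 1)) u1 u1 hYv1 hYv1 hYTu1
        rw [hv11, mul_one] at h
        exact mul_left_cancel₀ hs1c (h.trans (mul_one _).symm)
      obtain ⟨g1, h1, hg1def, hh1def, hgg1, hhh1, hUg1, hMg1⟩ :=
        g_facts X hX (s 1) u1 ((Matrix.posSemidef_conjTranspose_mul_self (offBlock X)).1.eigenvectorBasis (e2 1)) cc hcc huu1 hv11 hYv1 hYTu1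
      have hd1 := ip_conj_sub (Ipq 2 2) X IpqH g1
      rw [hMg1, hUg1, ip_smul_right, hgg1, mul_one] at hd1
      have hd1re : 2 * s 1 = (ip g1 (X *ᵥ g1)).re - (ip h1 (X *ᵥ h1)).re := by
        simpa [Complex.sub_re] using congrArg Complex.re hd1
      -- cross inner products
      have hu01 : ip u0 u1 = 0 := by
        have h := ip_u (offBlock X) (s 0) (s 1) hs1 ((Matrix.posSemidef_conjTranspose_mul_self (offBlock X)).1.eigenvectorBasis (e2 0)) ((Matrix.posSemidef_conjTranspose_mul_self (offBlock X)).1.eigenvectorBasis (e2 1)) u0 u1 hYv0 hYv1 hYTu1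
        rw [hv01, mul_zero] at h
        exact (mul_eq_zero.mp h).resolve_left hs0c
      have hu10 : ip u1 u0 = 0 := by
        have h := ip_u (offBlock X) (s 1) (s 0) hs0 ((Matrix.posSemidef_conjTranspose_mul_self (offBlock X)).1.eigenvectorBasis (e2 1)) ((Matrix.posSemidef_conjTranspose_mul_self (offBlock X)).1.eigenvectorBasis (e2 0)) u1 u0 hYv1 hYv0 hYTu0
        rw [hv10, mul_zero] at h
        exact (mul_eq_zero.mp h).resolve_left hs1c
      have hg01 : ip g0 g1 = 0 := by
        rw [hg0def, hg1def, ip_smul_left, ip_smul_right, ip_glueV, hu01, hv01]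
        ring
      have hg10 : ip g1 g0 = 0 := by
        rw [hg0def, hg1def, ip_smul_left, ip_smul_right, ip_glueV, hu10, hv10]
        ring
      have hh01 : ip h0 h1 = 0 := by
        rw [hh0def, hh1def, ip_smul_left, ip_smul_right, ip_glueV, hu01, ip_neg_neg, hv01]
        ring
      have hh10 : ip h1 h0 = 0 := by
        rw [hh0def, hh1def, ip_smul_left, ip_smul_right, ip_glueV, hu10, ip_neg_neg, hv10]
        ring
      -- inequality (iv) via Ky Fan
      have hkA := hkfup g0 g1 hgg0 hgg1 hg01
      have hkB := hkflow h0 h1 hhh0 hhh1 hh01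
      have ineq4 : lam 0 + lam 1 - lam 2 - lam 3 ≥ 2 * (s 0 + s 1) := by linarith
      -- inequality (ii)
      have ineq2 : lam 1 - lam 3 ≥ 2 * s 1 := by
        obtain ⟨a, bb, hab, habpos⟩ := exists_ab (⟪b 0, toE g0⟫_ℂ) (⟪b 0, toE g1⟫_ℂ)
        have hcnd : ⟪b 0, toE (a • g0 + bb • g1)⟫_ℂ = 0 := by
          have hsplit : ⟪b 0, toE (a • g0 + bb • g1)⟫_ℂ
              = a * ⟪b 0, toE g0⟫_ℂ + bb * ⟪b 0, toE g1⟫_ℂ := by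
            rw [show toE (a • g0 + bb • g1) = a • toE g0 + bb • toE g1 by simp [toE]]
            rw [inner_add_right, inner_smul_right, inner_smul_right]
          rw [hsplit]; exact hab
        have hux : Ipq 2 2 *ᵥ (a • g0 + bb • g1) = a • h0 + bb • h1 := by
          rw [Matrix.mulVec_add, Matrix.mulVec_smul, Matrix.mulVec_smul, hUg0, hUg1]
        have hNx : (ip (a • g0 + bb • g1) (a • g0 + bb • g1)).re = ‖a‖^2 + ‖bb‖^2 := by
          rw [ip_combo hgg0 hgg1 hg01 hg10, RCLike.conj_mul, RCLike.conj_mul]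
          simp [← Complex.ofReal_pow]
        have hNux : (ip (a • h0 + bb • h1) (a • h0 + bb • h1)).re = ‖a‖^2 + ‖bb‖^2 := by
          rw [ip_combo hhh0 hhh1 hh01 hh10, RCLike.conj_mul, RCLike.conj_mul]
          simp [← Complex.ofReal_pow]
        have hMx : (X - Ipq 2 2 * X * Ipq 2 2) *ᵥ (a • g0 + bb • g1)
            = (a * ((2 * s 0 : ℝ):ℂ)) • g0 + (bb * ((2 * s 1 : ℝ):ℂ)) • g1 := by
          rw [Matrix.mulVec_add, Matrix.mulVec_smul, Matrix.mulVec_smul, hMg0, hMg1,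
            smul_smul, smul_smul]
        have hdx : (ip (a • g0 + bb • g1) ((X - Ipq 2 2 * X * Ipq 2 2) *ᵥ (a • g0 + bb • g1))).re
            = 2 * s 0 * ‖a‖^2 + 2 * s 1 * ‖bb‖^2 := by
          rw [hMx, ip_combo hgg0 hgg1 hg01 hg10]
          have e1 : (starRingEnd ℂ) a * (a * ((2 * s 0 : ℝ):ℂ)) = ((2 * s 0 * ‖a‖^2 : ℝ) : ℂ) := by
            rw [show (starRingEnd ℂ) a * (a * ((2 * s 0 : ℝ):ℂ))
              = ((2 * s 0 : ℝ):ℂ) * (a * (starRingEnd ℂ) a) from by ring, RCLike.mul_conj]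
            push_cast
            norm_num
          have e2' : (starRingEnd ℂ) bb * (bb * ((2 * s 1 : ℝ):ℂ)) = ((2 * s 1 * ‖bb‖^2 : ℝ) : ℂ) := by
            rw [show (starRingEnd ℂ) bb * (bb * ((2 * s 1 : ℝ):ℂ))
              = ((2 * s 1 : ℝ):ℂ) * (bb * (starRingEnd ℂ) bb) from by ring, RCLike.mul_conj]
            push_cast
            norm_num
          rw [e1, e2', ← Complex.ofReal_add, Complex.ofReal_re]
        have hdcomp := ip_conj_sub (Ipq 2 2) X IpqH (a • g0 + bb • g1)
        rw [hux] at hdcomp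
        have hdre := congrArg Complex.re hdcomp
        rw [Complex.sub_re, hdx] at hdre
        have hu1b := hup1 (a • g0 + bb • g1) hcnd
        rw [hNx] at hu1b
        have hl3b := hlow (a • h0 + bb • h1)
        rw [hNux] at hl3b
        have h2N : 2 * s 1 * (‖a‖^2 + ‖bb‖^2) ≤ (lam 1 - lam 3) * (‖a‖^2 + ‖bb‖^2) := by
          nlinarith [mul_nonneg (by linarith : (0:ℝ) ≤ s 0 - s 1) (sq_nonneg ‖a‖)]
        exact le_of_mul_le_mul_right (by linarith) habpos
      -- inequality (iii)
      have ineq3 : lam 0 - lam 2 ≥ 2 * s 1 := by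
        obtain ⟨a, bb, hab, habpos⟩ := exists_ab (⟪b 3, toE h0⟫_ℂ) (⟪b 3, toE h1⟫_ℂ)
        have hcnd : ⟪b 3, toE (a • h0 + bb • h1)⟫_ℂ = 0 := by
          have hsplit : ⟪b 3, toE (a • h0 + bb • h1)⟫_ℂ
              = a * ⟪b 3, toE h0⟫_ℂ + bb * ⟪b 3, toE h1⟫_ℂ := by
            rw [show toE (a • h0 + bb • h1) = a • toE h0 + bb • toE h1 by simp [toE]]
            rw [inner_add_right, inner_smul_right, inner_smul_right]
          rw [hsplit]; exact hab
        have hux : Ipq 2 2 *ᵥ (a • g0 + bb • g1) = a • h0 + bb • h1 := by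
          rw [Matrix.mulVec_add, Matrix.mulVec_smul, Matrix.mulVec_smul, hUg0, hUg1]
        have hNx : (ip (a • g0 + bb • g1) (a • g0 + bb • g1)).re = ‖a‖^2 + ‖bb‖^2 := by
          rw [ip_combo hgg0 hgg1 hg01 hg10, RCLike.conj_mul, RCLike.conj_mul]
          simp [← Complex.ofReal_pow]
        have hNux : (ip (a • h0 + bb • h1) (a • h0 + bb • h1)).re = ‖a‖^2 + ‖bb‖^2 := by
          rw [ip_combo hhh0 hhh1 hh01 hh10, RCLike.conj_mul, RCLike.conj_mul]
          simp [← Complex.ofReal_pow]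
        have hMx : (X - Ipq 2 2 * X * Ipq 2 2) *ᵥ (a • g0 + bb • g1)
            = (a * ((2 * s 0 : ℝ):ℂ)) • g0 + (bb * ((2 * s 1 : ℝ):ℂ)) • g1 := by
          rw [Matrix.mulVec_add, Matrix.mulVec_smul, Matrix.mulVec_smul, hMg0, hMg1,
            smul_smul, smul_smul]
        have hdx : (ip (a • g0 + bb • g1) ((X - Ipq 2 2 * X * Ipq 2 2) *ᵥ (a • g0 + bb • g1))).re
            = 2 * s 0 * ‖a‖^2 + 2 * s 1 * ‖bb‖^2 := by
          rw [hMx, ip_combo hgg0 hgg1 hg01 hg10]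
          have e1 : (starRingEnd ℂ) a * (a * ((2 * s 0 : ℝ):ℂ)) = ((2 * s 0 * ‖a‖^2 : ℝ) : ℂ) := by
            rw [show (starRingEnd ℂ) a * (a * ((2 * s 0 : ℝ):ℂ))
              = ((2 * s 0 : ℝ):ℂ) * (a * (starRingEnd ℂ) a) from by ring, RCLike.mul_conj]
            push_cast
            norm_num
          have e2' : (starRingEnd ℂ) bb * (bb * ((2 * s 1 : ℝ):ℂ)) = ((2 * s 1 * ‖bb‖^2 : ℝ) : ℂ) := by
            rw [show (starRingEnd ℂ) bb * (bb * ((2 * s 1 : ℝ):ℂ))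
              = ((2 * s 1 : ℝ):ℂ) * (bb * (starRingEnd ℂ) bb) from by ring, RCLike.mul_conj]
            push_cast
            norm_num
          rw [e1, e2', ← Complex.ofReal_add, Complex.ofReal_re]
        have hdcomp := ip_conj_sub (Ipq 2 2) X IpqH (a • g0 + bb • g1)
        rw [hux] at hdcomp
        have hdre := congrArg Complex.re hdcomp
        rw [Complex.sub_re, hdx] at hdre
        have hu0b := hup (a • g0 + bb • g1)
        rw [hNx] at hu0b
        have hl2b := hlow2 (a • h0 + bb • h1) hcnd
        rw [hNux] at hl2b
        have h2N : 2 * s 1 * (‖a‖^2 + ‖bb‖^2) ≤ (lam 0 - lam 2) * (‖a‖^2 + ‖bb‖^2) := by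
          nlinarith [mul_nonneg (by linarith : (0:ℝ) ≤ s 0 - s 1) (sq_nonneg ‖a‖)]
        exact le_of_mul_le_mul_right (by linarith) habpos
      exact ⟨ineq1, ineq2, ineq3, ineq4⟩
end
end
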